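/- Let V be a seminormed abelian group, T, H : V → V norm non-increasing homomorphisms, and z ∈ V. Suppose there is C ≥ 0 such that ‖H^m(T^m(z)) − z‖ ≤ C for all m (H is an 'inverse up to bounded error'). Then lim_{m→∞} ‖H^m(z) − z‖/m ≤ lim_{m→∞} ‖T^m(z) − z‖/m. -/
import Mathlib

open Filter Topology

private lemma iter_norm_le {V : Type*} [SeminormedAddCommGroup V]
    (T : V →+ V) (hT : ∀ v, ‖T v‖ ≤ ‖v‖) : ∀ m v, ‖(⇑T)^[m] v‖ ≤ ‖v‖ := by
  intro m
  induction m with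
  | zero => simp
  | succ n ih =>
    intro v
    rw [Function.iterate_succ_apply]
    exact (ih _).trans (hT v)

private lemma iter_sub {V : Type*} [SeminormedAddCommGroup V]
    (T : V →+ V) : ∀ m (a b : V), (⇑T)^[m] (a - b) = (⇑T)^[m] a - (⇑T)^[m] b := by
  intro m
  induction m with
  | zero => simp
  | succ n ih =>
    intro a b
    simp [Function.iterate_succ_apply, map_sub, ih]

private lemma subadd {V : Type*} [SeminormedAddCommGroup V]
    (T : V →+ V) (hT : ∀ v, ‖T v‖ ≤ ‖v‖) (z : V) :
    Subadditive (fun m : ℕ => ‖(⇑T)^[m] z - z‖) := by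
  intro m n
  calc ‖(⇑T)^[m+n] z - z‖ = ‖((⇑T)^[n] ((⇑T)^[m] z) - (⇑T)^[n] z) + ((⇑T)^[n] z - z)‖ := by
        rw [add_comm m n, Function.iterate_add_apply]; abel_nf
    _ ≤ ‖(⇑T)^[n] ((⇑T)^[m] z) - (⇑T)^[n] z‖ + ‖(⇑T)^[n] z - z‖ := norm_add_le _ _
    _ ≤ ‖(⇑T)^[m] z - z‖ + ‖(⇑T)^[n] z - z‖ := by
        gcongr
        rw [← iter_sub T]
        exact iter_norm_le T hT n _

/-- If `H` is an inverse of `T` up to bounded error (`‖H^m (T^m z) - z‖ ≤ C`), and both are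
norm non-increasing, then `lim ‖H^m z - z‖ / m ≤ lim ‖T^m z - z‖ / m`. -/
theorem limit_of_inverse_le {V : Type*} [SeminormedAddCommGroup V]
    (T H : V →+ V) (hT : ∀ v, ‖T v‖ ≤ ‖v‖) (hH : ∀ v, ‖H v‖ ≤ ‖v‖) (z : V)
    (C : ℝ) (hC : 0 ≤ C) (hbd : ∀ m : ℕ, ‖(⇑H)^[m] ((⇑T)^[m] z) - z‖ ≤ C) :
    ∃ L₁ L₂ : ℝ, Tendsto (fun m : ℕ => ‖(⇑H)^[m] z - z‖ / m) atTop (𝓝 L₁) ∧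
      Tendsto (fun m : ℕ => ‖(⇑T)^[m] z - z‖ / m) atTop (𝓝 L₂) ∧ L₁ ≤ L₂ := by
  have sH := subadd H hH z
  have sT := subadd T hT z
  have bddH : BddBelow (Set.range fun n : ℕ => ‖(⇑H)^[n] z - z‖ / n) := by
    refine ⟨0, ?_⟩
    rintro x ⟨n, rfl⟩
    positivity
  have bddT : BddBelow (Set.range fun n : ℕ => ‖(⇑T)^[n] z - z‖ / n) := by
    refine ⟨0, ?_⟩
    rintro x ⟨n, rfl⟩
    positivity
  refine ⟨sH.lim, sT.lim, sH.tendsto_lim bddH, sT.tendsto_lim bddT, ?_⟩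
  -- key pointwise bound
  have key : ∀ m : ℕ, ‖(⇑H)^[m] z - z‖ ≤ ‖(⇑T)^[m] z - z‖ + C := by
    intro m
    calc ‖(⇑H)^[m] z - z‖
        = ‖((⇑H)^[m] z - (⇑H)^[m] ((⇑T)^[m] z)) + ((⇑H)^[m] ((⇑T)^[m] z) - z)‖ := by abel_nf
      _ ≤ ‖(⇑H)^[m] z - (⇑H)^[m] ((⇑T)^[m] z)‖ + ‖(⇑H)^[m] ((⇑T)^[m] z) - z‖ := norm_add_le _ _
      _ ≤ ‖z - (⇑T)^[m] z‖ + C := by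
          gcongr
          · rw [← iter_sub H]; exact iter_norm_le H hH m _
          · exact hbd m
      _ = ‖(⇑T)^[m] z - z‖ + C := by rw [norm_sub_rev]
  have hCm : Tendsto (fun m : ℕ => ‖(⇑T)^[m] z - z‖ / m + C / m) atTop (𝓝 (sT.lim + 0)) :=
    (sT.tendsto_lim bddT).add (tendsto_const_nhds.div_atTop tendsto_natCast_atTop_atTop)
  rw [add_zero] at hCm
  refine le_of_tendsto_of_tendsto' (sH.tendsto_lim bddH) hCm fun m => ?_
  rcases Nat.eq_zero_or_pos m with rfl | hm
  · simp [hC]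
  · rw [← add_div]
    exact div_le_div_of_nonneg_right (key m) (by positivity)
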